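/- Let S be a binary string (over {0,1} with involution σ ↦ 1−σ). If S ∈ 01·Σ*·(1̄0̄)·(0̄)^k for some k ≥ 2 (i.e., S has prefix 01 and suffix 1̄·0̄^k with k ≥ 2, writing 0̄=1 and 1̄=0), then the only valid hairpin deletion operations on S (in the modified sense: a left or right deletion of length ℓ ≤ ⌊|S|/2⌋ requiring S[1..ℓ] = ⟵S[|S|−ℓ+1..|S|]) are of length 1. -/

import Mathlib

/-- characterwise complement followed by reversal: the "reverse complement" ⟵w -/
def rc (w : List Bool) : List Bool := (w.map (fun b => !b)).reverse

/-- one (modified) hairpin deletion step: remove a prefix (left) or suffix (right)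
of length `ℓ ∈ [⌊|S|/2⌋]` that equals the reverse complement of the opposite end. -/
def HDel (S T : List Bool) : Prop :=
  ∃ ℓ, 1 ≤ ℓ ∧ ℓ ≤ S.length / 2 ∧ S.take ℓ = rc (S.drop (S.length - ℓ)) ∧
    (T = S.drop ℓ ∨ T = S.take (S.length - ℓ))

/-- `HDelN n S T`: `T` is obtained from `S` by exactly `n` hairpin deletions. -/
def HDelN : ℕ → List Bool → List Bool → Prop
  | 0, S, T => S = T
  | n + 1, S, T => ∃ U, HDel S U ∧ HDelN n U T

/-- hairpin deletion distance (∞ if unreachable) -/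
noncomputable def HDD (x y : List Bool) : ℕ∞ :=
  sInf {n : ℕ∞ | ∃ m : ℕ, n = (m : ℕ∞) ∧ HDelN m x y}

/-- one (modified) hairpin completion step -/
def HComp (S T : List Bool) : Prop :=
  ∃ ℓ, 1 ≤ ℓ ∧ ℓ ≤ S.length ∧
    (T = S ++ rc (S.take ℓ) ∨ T = rc (S.drop (S.length - ℓ)) ++ S)

def HCompN : ℕ → List Bool → List Bool → Prop
  | 0, S, T => S = T
  | n + 1, S, T => ∃ U, HComp S U ∧ HCompN n U T

/-- hairpin completion distance (∞ if unreachable) -/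
noncomputable def HCD (x y : List Bool) : ℕ∞ :=
  sInf {n : ℕ∞ | ∃ m : ℕ, n = (m : ℕ∞) ∧ HCompN m x y}

/-- `w` concatenated with itself `k` times, `w^k` -/
def repL (w : List Bool) (k : ℕ) : List Bool := (List.replicate k w).flatten

/-- If `S` has prefix `01` and suffix `1̄·0̄^k` (with `0̄ = 1`, `1̄ = 0`) for some `k ≥ 2`,
then the only valid (modified) hairpin deletions on `S` are of length 1. -/
theorem hairpin_deletion_length_one
    (S mid : List Bool) (k : ℕ) (hk : 2 ≤ k)
    (hS : S = [false, true] ++ mid ++ (false :: List.replicate k true)) :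
    ∀ ℓ, 1 ≤ ℓ → ℓ ≤ S.length / 2 →
      S.take ℓ = rc (S.drop (S.length - ℓ)) → ℓ = 1 := by
  intro ℓ h1 h2 heq
  by_contra hne
  have hℓ2 : 2 ≤ ℓ := by omega
  have hn : S.length = k + mid.length + 3 := by subst hS; simp; omega
  have hlen : 2 * ℓ ≤ S.length := by
    have := (Nat.le_div_iff_mul_le (by norm_num : 0 < 2)).1 h2; omega
  have h := congrArg (fun l => l[1]?) heq
  simp only [rc] at h
  have hdl : (S.drop (S.length - ℓ)).length = ℓ := by
    rw [List.length_drop]; omega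
  rw [List.getElem?_take, if_pos (by omega)] at h
  rw [List.getElem?_reverse (by simp [hdl]; omega)] at h
  rw [List.getElem?_map] at h
  simp only [List.length_map, hdl] at h
  rw [List.getElem?_drop] at h
  have hidx : S.length - ℓ + (ℓ - 1 - 1) = S.length - 2 := by omega
  rw [hidx] at h
  have h1v : S[1]? = some true := by subst hS; simp
  have h2v : S[S.length - 2]? = some true := by
    subst hS
    rw [hn] at *
    rw [List.getElem?_append_right (by simp; omega)]
    rw [show k + mid.length + 3 - 2 - ([false, true] ++ mid).length = k - 1 from by simp; omega]
    rw [List.getElem?_cons]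
    have hk1 : k - 1 ≠ 0 := by omega
    simp [hk1, List.getElem?_replicate]
    omega
  rw [h1v, h2v] at h
  simp at h
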